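/- If I is an ideal of R generated by homogeneous elements of a single degree d and dim R/I = 0, then the defect sequence c_n = reg I^{n-1}/I^n − dn + 1 of the function reg I^{n-1}/I^n is weakly decreasing, i.e. c_{n+1} ≤ c_n for all n ≥ 1. -/

import Mathlib

/-!
Common setup.

We encode a finitely generated standard graded algebra `R` over a field `k` by the data
`StdGraded k R`: the grading `deg : ℤ → Submodule k R` (an internal direct sum, vanishing
in negative degrees, with `deg 0 = k·1` and `deg (n+1) = deg 1 * deg n`), together with a
finite family `gen` of degree-one elements spanning `deg 1` over `k` (so `R` is generated
in degree one by finitely many elements).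

For homogeneous ideals `B ⊆ A` of `R`, the Castelnuovo–Mumford regularity of the graded
module `A/B` is formalized through the classical characterization
`reg M = max { j - i : β_{i,j}(M) ≠ 0 }`, where `β_{i,j}(M) = dim_k (Tor_i^S(M, k))_j` is
the graded Betti number over a polynomial ring `S = k[X_1, …, X_r]` mapping onto `R` via
the chosen degree-one generators.  These Betti numbers are computed honestly as the
homology of the graded Koszul complex `K(x_1, …, x_r; M)` on the degree-one generators:
`TorNonzero G A B i j` says that this Koszul homology of `A/B` is nonzero in homological
degree `i` and internal degree `j`.  This agrees with the local cohomology definition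
`reg M = max { a(H_m^i(M)) + i : i ≥ 0 }` for finitely generated graded modules over a
standard graded algebra.  Similarly, by a theorem of Trung, the partial regularity
`reg_t M = max { a(H_m^i(M)) + i : i ≤ t }` equals
`max { j - i : β_{i,j}(M) ≠ 0, i ≥ r - t }`, which is taken as the definition
`preg` below.
-/

structure StdGraded (k R : Type) [Field k] [CommRing R] [Algebra k R] where
  deg : ℤ → Submodule k R
  internal : DirectSum.IsInternal deg
  bot_of_neg : ∀ i : ℤ, i < 0 → deg i = ⊥
  deg_zero : deg 0 = 1
  standard : ∀ n : ℕ, deg ((n : ℤ) + 1) = deg 1 * deg (n : ℤ)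
  ngens : ℕ
  gen : Fin ngens → R
  gen_mem : ∀ i, gen i ∈ deg 1
  gen_span : Submodule.span k (Set.range gen) = deg 1

variable {k R : Type} [Field k] [CommRing R] [Algebra k R]

/-- The Koszul differential on the Koszul complex (on the degree-one generators of `R`)
with coefficients in `R`; a function `Finset (Fin r) → R` records the coordinates of an
element of an exterior power component with respect to the basis `e_s`. -/
noncomputable def kosD (G : StdGraded k R) (f : Finset (Fin G.ngens) → R) :
    Finset (Fin G.ngens) → R := fun t =>
  ∑ j ∈ tᶜ, (-1 : R) ^ ((t.filter fun l => l < j).card) * G.gen j * f (insert j t)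

/-- `TorNonzero G A B i j` : the internal degree `j` part of the `i`-th homology of the
Koszul complex of the degree-one generators with coefficients in the graded module `A/B`
is nonzero; equivalently, the graded Betti number `β_{i,j}(A/B)` over a polynomial ring
mapping onto `R` is nonzero. -/
def TorNonzero (G : StdGraded k R) (A B : Ideal R) (i : ℕ) (j : ℤ) : Prop :=
  ∃ f : Finset (Fin G.ngens) → R,
    (∀ s, if s.card = i then f s ∈ A ∧ f s ∈ G.deg (j - (i : ℤ)) else f s = 0) ∧
    (∀ t, kosD G f t ∈ B) ∧
    ¬ ∃ g : Finset (Fin G.ngens) → R,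
        (∀ s, if s.card = i + 1 then g s ∈ A ∧ g s ∈ G.deg (j - (i : ℤ) - 1) else g s = 0) ∧
        (∀ s, f s - kosD G g s ∈ B)

/-- The Castelnuovo–Mumford regularity `reg (A/B) = max { a(H_m^i(A/B)) + i : i ≥ 0 }` of
the graded `R`-module `A/B`, via the graded Betti number characterization
`reg = max { j - i : β_{i,j} ≠ 0 }`. -/
noncomputable def reg (G : StdGraded k R) (A B : Ideal R) : ℤ :=
  sSup {e : ℤ | ∃ (i : ℕ) (j : ℤ), e = j - (i : ℤ) ∧ TorNonzero G A B i j}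

/-- The partial regularity `reg_t (A/B) = max { a(H_m^i(A/B)) + i : 0 ≤ i ≤ t }`, via
Trung's characterization `reg_t M = max { j - i : β_{i,j}(M) ≠ 0, i ≥ r - t }`. -/
noncomputable def preg (G : StdGraded k R) (t : ℕ) (A B : Ideal R) : ℤ :=
  sSup {e : ℤ | ∃ (i : ℕ) (j : ℤ), G.ngens - t ≤ i ∧ e = j - (i : ℤ) ∧ TorNonzero G A B i j}

/-- `I` is a homogeneous (graded) ideal. -/
def IsHomogeneousIdeal (G : StdGraded k R) (I : Ideal R) : Prop :=
  ∃ T : Set R, (∀ s ∈ T, ∃ j : ℤ, s ∈ G.deg j) ∧ I = Ideal.span T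

/-- `I` is generated by forms of the single degree `d` (equigenerated). -/
def GeneratedInDegree (G : StdGraded k R) (d : ℕ) (I : Ideal R) : Prop :=
  ∃ T : Set R, T ⊆ (G.deg (d : ℤ) : Set R) ∧ I = Ideal.span T

/-- The irrelevant maximal graded ideal `m = ⊕_{i > 0} R_i` of the standard graded
algebra `R` (generated by the degree-one part). -/
def irrel (G : StdGraded k R) : Ideal R := Ideal.span (G.deg 1 : Set R)

/-- The saturation `Ĩ = ∪_t (I : m^t)` of an ideal `I`. -/
noncomputable def satIdeal (G : StdGraded k R) (I : Ideal R) : Ideal R :=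
  ⨆ t : ℕ, Submodule.colon I (((irrel G) ^ t : Ideal R) : Set R)

open Classical in
/-- The supremum in `WithBot ℤ` of a set of integers: `⊥` (i.e. `-∞`) if the set is
empty.  (Junk value if the set is unbounded above.) -/
noncomputable def zsupBot (s : Set ℤ) : WithBot ℤ :=
  if s.Nonempty then ((sSup s : ℤ) : WithBot ℤ) else ⊥

/-- The saturation degree `sdeg I = a(Ĩ/I) + 1 = a(H_m^0(R/I)) + 1`: the least degree
from which `Ĩ` and `I` agree, `⊥` (i.e. `-∞`) if `Ĩ = I`. -/
noncomputable def sdegB (G : StdGraded k R) (I : Ideal R) : WithBot ℤ :=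
  zsupBot {a : ℤ | ∃ j : ℤ, a = j + 1 ∧ ∃ y : R, y ∈ G.deg j ∧ y ∈ satIdeal G I ∧ y ∉ I}


namespace StdGraded

theorem deg_mul_deg (G : StdGraded k R) : ∀ (a b : ℕ), G.deg a * G.deg b = G.deg ((a : ℤ) + b) := by
  intro a
  induction a with
  | zero => intro b; simp [G.deg_zero, one_mul]
  | succ n ih =>
    intro b
    have h1 : ((n + 1 : ℕ) : ℤ) = (n : ℤ) + 1 := by push_cast; ring
    have h2 : ((n + 1 : ℕ) : ℤ) + b = ((n + b : ℕ) : ℤ) + 1 := by push_cast; ring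
    rw [h1, G.standard n, mul_assoc, ih b]
    rw [show (n : ℤ) + 1 + b = ((n + b : ℕ) : ℤ) + 1 by push_cast; ring, G.standard (n + b)]
    norm_num

theorem mul_mem_deg (G : StdGraded k R) {i j : ℤ} {x y : R} (hx : x ∈ G.deg i) (hy : y ∈ G.deg j) :
    x * y ∈ G.deg (i + j) := by
  rcases lt_or_ge i 0 with hi | hi
  · rw [G.bot_of_neg i hi] at hx; simp_all
  rcases lt_or_ge j 0 with hj | hj
  · rw [G.bot_of_neg j hj] at hy; simp_all
  obtain ⟨a, rfl⟩ := Int.eq_ofNat_of_zero_le hi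
  obtain ⟨b, rfl⟩ := Int.eq_ofNat_of_zero_le hj
  rw [← G.deg_mul_deg a b]
  exact Submodule.mul_mem_mul hx hy

instance gradedMonoid (G : StdGraded k R) : SetLike.GradedMonoid G.deg where
  one_mem := by rw [G.deg_zero]; exact Submodule.one_le.mp le_rfl
  mul_mem := fun {i j x y} hx hy => G.mul_mem_deg hx hy

noncomputable def GR (G : StdGraded k R) : GradedRing G.deg :=
  { G.gradedMonoid, G.internal.chooseDecomposition with }

end StdGraded

namespace StdGraded
open DirectSum

variable (G : StdGraded k R)

/-- degree-j projection -/
noncomputable def pi (j : ℤ) (x : R) : R :=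
  letI := G.GR
  (DirectSum.decompose G.deg x j : R)

theorem pi_add (j : ℤ) (x y : R) : G.pi j (x + y) = G.pi j x + G.pi j y := by
  letI := G.GR
  simp [pi, DirectSum.decompose_add]

theorem pi_zero (j : ℤ) : G.pi j 0 = 0 := by
  letI := G.GR
  simp [pi]

theorem pi_mem (j : ℤ) (x : R) : G.pi j x ∈ G.deg j := by
  letI := G.GR
  exact (DirectSum.decompose G.deg x j).2

theorem pi_of_mem_same {j : ℤ} {x : R} (h : x ∈ G.deg j) : G.pi j x = x := by
  letI := G.GR
  exact DirectSum.decompose_of_mem_same G.deg h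

theorem pi_of_mem_ne {i j : ℤ} {x : R} (h : x ∈ G.deg i) (hne : i ≠ j) : G.pi j x = 0 := by
  letI := G.GR
  exact DirectSum.decompose_of_mem_ne G.deg h hne

theorem pi_induction (p : R → Prop) (h0 : p 0) (hhom : ∀ (i : ℤ) (x : R), x ∈ G.deg i → p x)
    (hadd : ∀ x y, p x → p y → p (x + y)) : ∀ x, p x := by
  letI := G.GR
  intro x
  exact DirectSum.Decomposition.inductionOn G.deg h0 (fun {i} z => hhom i z z.2) hadd x

/-- key lemma: projection interacts with multiplication by a homogeneous element -/
theorem pi_mul_homog {d' : ℤ} {t : R} (ht : t ∈ G.deg d') (j : ℤ) :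
    ∀ u : R, G.pi j (t * u) = t * G.pi (j - d') u := by
  refine G.pi_induction (fun u => G.pi j (t * u) = t * G.pi (j - d') u) ?_ ?_ ?_
  · simp [G.pi_zero]
  · intro i x hx
    rcases eq_or_ne (j - d') i with hji | hji
    · have hxi : t * x ∈ G.deg j := by
        have := G.mul_mem_deg ht hx
        rwa [show d' + i = j by omega] at this
      rw [G.pi_of_mem_same hxi, G.pi_of_mem_same (hji ▸ hx)]
    · rw [G.pi_of_mem_ne hx (Ne.symm hji),
        G.pi_of_mem_ne (G.mul_mem_deg ht hx) (by omega), mul_zero]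
  · intro x y hx hy
    rw [mul_add, G.pi_add, G.pi_add, hx, hy, mul_add]

theorem sum_support_pi (x : R) :
    ∃ s : Finset ℤ, (∀ j ∉ s, G.pi j x = 0) ∧ ∑ j ∈ s, G.pi j x = x := by
  classical
  letI := G.GR
  refine ⟨(DirectSum.decompose G.deg x).support, ?_, ?_⟩
  · intro j hj
    simpa [pi] using DFinsupp.notMem_support_iff.mp hj
  · exact DirectSum.sum_support_decompose G.deg x

theorem pi_eq_zero_of_neg {j : ℤ} (hj : j < 0) (x : R) : G.pi j x = 0 := by
  have := G.pi_mem j x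
  rw [G.bot_of_neg j hj] at this
  simpa using this

end StdGraded

namespace StdGraded
open DirectSum Pointwise

variable (G : StdGraded k R)

noncomputable def piHom (j : ℤ) : R →+ R where
  toFun := G.pi j
  map_zero' := G.pi_zero j
  map_add' := G.pi_add j

theorem pi_sum {α : Type*} (j : ℤ) (s : Finset α) (f : α → R) :
    G.pi j (∑ a ∈ s, f a) = ∑ a ∈ s, G.pi j (f a) :=
  map_sum (G.piHom j) f s

theorem Tpow_subset_deg {d : ℕ} {T : Set R} (hT : T ⊆ (G.deg (d : ℤ) : Set R)) :
    ∀ n : ℕ, (T ^ n : Set R) ⊆ (G.deg ((d * n : ℕ) : ℤ) : Set R) := by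
  intro n
  induction n with
  | zero =>
    intro x hx
    rw [pow_zero, Set.mem_one] at hx
    subst hx
    have h1 : (1:R) ∈ (1 : Submodule k R) := by
      rw [Submodule.one_eq_span]; exact Submodule.mem_span_singleton_self 1
    simpa [G.deg_zero] using h1
  | succ n ih =>
    intro x hx
    rw [pow_succ] at hx
    obtain ⟨a, ha, b, hb, rfl⟩ := Set.mem_mul.mp hx
    have := G.mul_mem_deg (ih ha) (hT hb)
    rwa [show ((d * n : ℕ) : ℤ) + (d : ℤ) = ((d * (n+1) : ℕ) : ℤ) by push_cast; ring] at this

theorem pow_isHomogeneous {d : ℕ} {T : Set R} (hT : T ⊆ (G.deg (d : ℤ) : Set R)) (n : ℕ)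
    {j : ℤ} {x : R} (hx : x ∈ Ideal.span T ^ n) : G.pi j x ∈ Ideal.span T ^ n := by
  letI := G.GR
  revert j x
  have hhom : Ideal.IsHomogeneous G.deg (Ideal.span T ^ n) := by
    induction n with
    | zero => simpa using Ideal.IsHomogeneous.top G.deg
    | succ n ih =>
      rw [pow_succ]
      exact Ideal.IsHomogeneous.mul ih
        (Ideal.homogeneous_span G.deg T (fun x hx => ⟨(d : ℤ), hT hx⟩))
  exact fun j x hx => hhom j hx

/-- Representation: every degree-`j` component of an element of `I^n` (`n ≥ 1`) is an
`R`-combination of elements `t * w` with `t ∈ T` and `w ∈ I^(n-1)` of degree `j - d`. -/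
theorem pi_pow_rep {d : ℕ} {T : Set R} (hT : T ⊆ (G.deg (d : ℤ) : Set R)) (n : ℕ)
    {x : R} (hx : x ∈ Ideal.span T ^ (n + 1)) (j : ℤ) :
    G.pi j x ∈ Ideal.span {z | ∃ t ∈ T, ∃ w, w ∈ Ideal.span T ^ n ∧
      w ∈ G.deg (j - (d : ℤ)) ∧ z = t * w} := by
  classical
  rw [Ideal.span, Submodule.span_pow] at hx
  obtain ⟨c, hsupp, hsum⟩ := Submodule.mem_span_set.mp hx
  rw [← hsum, Finsupp.sum, G.pi_sum]
  refine Submodule.sum_mem _ ?_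
  intro m hm
  have hmem : m ∈ T * T ^ n := by
    have := hsupp hm
    rwa [pow_succ'] at this
  obtain ⟨t, ht, m', hm', rfl⟩ := Set.mem_mul.mp hmem
  have key : G.pi j (c (t * m') • (t * m')) = t * G.pi (j - (d : ℤ)) (c (t * m') * m') := by
    rw [smul_eq_mul, show c (t * m') * (t * m') = t * (c (t * m') * m') by ring]
    exact G.pi_mul_homog (hT ht) j _
  rw [key]
  refine Ideal.subset_span ?_
  refine ⟨t, ht, G.pi (j - (d : ℤ)) (c (t * m') * m'), ?_, G.pi_mem _ _, rfl⟩
  refine G.pow_isHomogeneous hT n ?_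
  have hm'I : m' ∈ Ideal.span T ^ n := by
    rw [Ideal.span, Submodule.span_pow]
    exact Submodule.subset_span hm'
  exact Ideal.mul_mem_left _ _ hm'I

/-- vanishing in low degrees -/
theorem pow_deg_vanish {d : ℕ} {T : Set R} (hT : T ⊆ (G.deg (d : ℤ) : Set R)) (n : ℕ)
    {j : ℤ} (hj : j < (d : ℤ) * n) {x : R} (hx : x ∈ Ideal.span T ^ n)
    (hxd : x ∈ G.deg j) : x = 0 := by
  classical
  rw [Ideal.span, Submodule.span_pow] at hx
  obtain ⟨c, hsupp, hsum⟩ := Submodule.mem_span_set.mp hx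
  have h1 : G.pi j x = x := G.pi_of_mem_same hxd
  rw [← h1, ← hsum, Finsupp.sum, G.pi_sum]
  refine Finset.sum_eq_zero ?_
  intro m hm
  have hmd : m ∈ G.deg ((d * n : ℕ) : ℤ) := G.Tpow_subset_deg hT n (hsupp hm)
  rw [smul_eq_mul, mul_comm, G.pi_mul_homog hmd j, G.pi_eq_zero_of_neg (by push_cast at hj ⊢; omega), mul_zero]

end StdGraded

namespace StdGraded
open DirectSum Pointwise

variable (G : StdGraded k R)

theorem pi_mul_vanish {x : R} {j : ℤ} (hx : ∀ j' ≤ j, G.pi j' x = 0) (r : R) :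
    G.pi j (r * x) = 0 := by
  obtain ⟨s, hs0, hssum⟩ := G.sum_support_pi r
  rw [← hssum, Finset.sum_mul, G.pi_sum]
  refine Finset.sum_eq_zero fun i _ => ?_
  rcases lt_or_ge i 0 with hi | hi
  · rw [G.pi_eq_zero_of_neg hi, zero_mul, G.pi_zero]
  · rw [G.pi_mul_homog (G.pi_mem i r) j, hx (j - i) (by omega), mul_zero]

theorem pi_nonpos_of_mem_irrel {x : R} (hx : x ∈ irrel G) : ∀ j ≤ 0, G.pi j x = 0 := by
  refine Submodule.span_induction ?_ ?_ ?_ ?_ hx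
  · intro y hy j hj
    exact G.pi_of_mem_ne hy (by omega)
  · intro j _; exact G.pi_zero j
  · intro a b _ _ ha hb j hj
    rw [G.pi_add, ha j hj, hb j hj, add_zero]
  · intro r a _ ha j hj
    rw [smul_eq_mul]
    exact G.pi_mul_vanish (fun j' hj' => ha j' (le_trans hj' hj)) r

theorem deg_le_irrel {j : ℤ} (hj : 1 ≤ j) {x : R} (hx : x ∈ G.deg j) : x ∈ irrel G := by
  obtain ⟨n, rfl⟩ := Int.eq_ofNat_of_zero_le (by omega : (0:ℤ) ≤ j)
  rcases Nat.exists_eq_add_of_le (by exact_mod_cast hj : 1 ≤ n) with ⟨m, rfl⟩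
  have hd : G.deg ((1 + m : ℕ) : ℤ) = G.deg 1 * G.deg (m : ℤ) := by
    rw [show ((1 + m : ℕ) : ℤ) = (m : ℤ) + 1 by push_cast; ring]
    exact G.standard m
  rw [hd] at hx
  have hle : G.deg 1 * G.deg (m : ℤ) ≤ Submodule.restrictScalars k (irrel G) := by
    rw [Submodule.mul_le]
    intro a ha b hb
    exact Ideal.mul_mem_right b _ (Ideal.subset_span ha)
  exact hle hx

theorem mem_irrel_iff (x : R) : x ∈ irrel G ↔ G.pi 0 x = 0 := by
  constructor
  · intro hx; exact G.pi_nonpos_of_mem_irrel hx 0 le_rfl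
  · intro h0
    obtain ⟨s, hs0, hssum⟩ := G.sum_support_pi x
    rw [← hssum]
    refine Submodule.sum_mem _ fun j hj => ?_
    rcases lt_trichotomy j 0 with hjn | rfl | hjp
    · rw [G.pi_eq_zero_of_neg hjn]; exact zero_mem _
    · rw [h0]; exact zero_mem _
    · exact G.deg_le_irrel (by omega) (G.pi_mem j x)

theorem pi_zero_one (h1 : (1 : R) ≠ 0) : G.pi 0 (1 : R) = 1 := by
  refine G.pi_of_mem_same ?_
  rw [G.deg_zero]
  rw [Submodule.one_eq_span]; exact Submodule.mem_span_singleton_self 1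

theorem exists_algebraMap_of_deg_zero {x : R} (hx : x ∈ G.deg 0) :
    ∃ c : k, algebraMap k R c = x := by
  rw [G.deg_zero] at hx
  exact Submodule.mem_one.mp hx

theorem irrel_ne_top (h1 : (1 : R) ≠ 0) : irrel G ≠ ⊤ := by
  rw [Ideal.ne_top_iff_one, mem_irrel_iff, G.pi_zero_one h1]
  exact h1

theorem pi_sub (j : ℤ) (x y : R) : G.pi j (x - y) = G.pi j x - G.pi j y :=
  map_sub (G.piHom j) x y

theorem irrel_isPrime (h1 : (1 : R) ≠ 0) : (irrel G).IsPrime := by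
  constructor
  · exact G.irrel_ne_top h1
  · intro x y hxy
    by_contra hcon
    push_neg at hcon
    obtain ⟨hx, hy⟩ := hcon
    rw [mem_irrel_iff] at hx hy hxy
    set a := G.pi 0 x with ha
    set b := G.pi 0 y with hb
    have hxa : x - a ∈ irrel G := by
      rw [mem_irrel_iff, G.pi_sub, ← ha, G.pi_of_mem_same (G.pi_mem 0 x), sub_self]
    have hyb : y - b ∈ irrel G := by
      rw [mem_irrel_iff, G.pi_sub, ← hb, G.pi_of_mem_same (G.pi_mem 0 y), sub_self]
    have hdecomp : x * y - a * b = a * (y - b) + (x - a) * y := by ring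
    have hmm : x * y - a * b ∈ irrel G :=
      hdecomp ▸ Ideal.add_mem _ (Ideal.mul_mem_left _ a hyb) (Ideal.mul_mem_right y _ hxa)
    have hab : a * b = 0 := by
      have h2 : G.pi 0 (x * y) = G.pi 0 (a * b) + G.pi 0 (x * y - a * b) := by
        rw [← G.pi_add]; ring_nf
      have h3 : G.pi 0 (a * b) = a * b := by
        refine G.pi_of_mem_same ?_
        have := G.mul_mem_deg (G.pi_mem 0 x) (G.pi_mem 0 y)
        simpa using this
      rw [hxy, h3, (G.mem_irrel_iff _).mp hmm, add_zero] at h2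
      exact h2.symm
    obtain ⟨c, hc⟩ := G.exists_algebraMap_of_deg_zero (G.pi_mem 0 x)
    obtain ⟨c', hc'⟩ := G.exists_algebraMap_of_deg_zero (G.pi_mem 0 y)
    have hcne : c ≠ 0 := by rintro rfl; rw [map_zero] at hc; exact hx hc.symm
    have hcne' : c' ≠ 0 := by rintro rfl; rw [map_zero] at hc'; exact hy hc'.symm
    have : (1 : R) = 0 := by
      calc (1 : R) = algebraMap k R ((c * c') * (c * c')⁻¹) := by
            rw [mul_inv_cancel₀ (mul_ne_zero hcne hcne'), map_one]
        _ = (a * b) * algebraMap k R (c * c')⁻¹ := by rw [map_mul, map_mul, hc, hc', ha, hb]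
        _ = 0 := by rw [hab, zero_mul]
    exact h1 this

end StdGraded

namespace StdGraded
open DirectSum Pointwise

theorem one_ne_zero_R {T : Set R} (hproper : Ideal.span T ≠ ⊤) : (1 : R) ≠ 0 := by
  intro h
  exact hproper (Ideal.eq_top_iff_one _ |>.mpr (h ▸ (Ideal.span T).zero_mem))

theorem noetherianR (G : StdGraded k R) : IsNoetherianRing R := by
  have hadj : ∀ (n : ℕ) (x : R), x ∈ G.deg (n : ℤ) → x ∈ Algebra.adjoin k (Set.range G.gen) := by
    intro n
    induction n with
    | zero =>
      intro x hx
      obtain ⟨c, hc⟩ := G.exists_algebraMap_of_deg_zero hx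
      exact hc ▸ (Algebra.adjoin k (Set.range G.gen)).algebraMap_mem c
    | succ n ih =>
      intro x hx
      rw [show ((n + 1 : ℕ) : ℤ) = (n : ℤ) + 1 from by push_cast; ring, G.standard n] at hx
      have hle : G.deg 1 * G.deg (n : ℤ) ≤
          Subalgebra.toSubmodule (Algebra.adjoin k (Set.range G.gen)) := by
        rw [Submodule.mul_le]
        intro a ha b hb
        have ha' : a ∈ Algebra.adjoin k (Set.range G.gen) := by
          have h2 : Submodule.span k (Set.range G.gen) ≤
              Subalgebra.toSubmodule (Algebra.adjoin k (Set.range G.gen)) := by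
            rw [Submodule.span_le]
            exact fun y hy => Algebra.subset_adjoin hy
          exact h2 (G.gen_span ▸ ha)
        exact (Algebra.adjoin k (Set.range G.gen)).mul_mem ha' (ih b hb)
      exact hle hx
  classical
  have hft : Algebra.FiniteType k R := by
    refine ⟨⟨Finset.univ.image G.gen, ?_⟩⟩
    rw [Finset.coe_image, Finset.coe_univ, Set.image_univ]
    rw [eq_top_iff]
    intro x _
    obtain ⟨s, hs0, hssum⟩ := G.sum_support_pi x
    rw [← hssum]
    refine Subalgebra.sum_mem _ fun j hj => ?_
    rcases lt_or_ge j 0 with hjn | hjp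
    · rw [G.pi_eq_zero_of_neg hjn]; exact Subalgebra.zero_mem _
    · obtain ⟨n, rfl⟩ := Int.eq_ofNat_of_zero_le hjp
      exact hadj n _ (G.pi_mem _ x)
  exact Algebra.FiniteType.isNoetherianRing k R

variable (G : StdGraded k R)

theorem irrel_le_radical {d : ℕ} (hd : 1 ≤ d) {T : Set R} (hT : T ⊆ (G.deg (d : ℤ) : Set R))
    (hproper : Ideal.span T ≠ ⊤) (hdim : ringKrullDim (R ⧸ Ideal.span T) = 0) :
    irrel G ≤ (Ideal.span T).radical := by
  letI := G.GR
  have h1 : (1 : R) ≠ 0 := one_ne_zero_R hproper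
  have hIhom : (Ideal.span T).IsHomogeneous G.deg :=
    Ideal.homogeneous_span G.deg T (fun x hx => ⟨(d : ℤ), hT hx⟩)
  rw [hIhom.radical_eq]
  refine le_sInf ?_
  rintro J ⟨hJhom, hIJ, hJprime⟩
  -- J is contained in the irrelevant ideal
  have hJm : J ≤ irrel G := by
    intro x hxJ
    rw [mem_irrel_iff]
    by_contra hne0
    have hpiJ : G.pi 0 x ∈ J := hJhom 0 hxJ
    obtain ⟨c, hc⟩ := G.exists_algebraMap_of_deg_zero (G.pi_mem 0 x)
    have hcne : c ≠ 0 := by rintro rfl; rw [map_zero] at hc; exact hne0 hc.symm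
    have hone : (1 : R) ∈ J := by
      have h2 := J.mul_mem_left (algebraMap k R c⁻¹) hpiJ
      rwa [← hc, ← map_mul, inv_mul_cancel₀ hcne, map_one] at h2
    exact hJprime.ne_top (Ideal.eq_top_iff_one _ |>.mpr hone)
  rcases eq_or_lt_of_le hJm with heq | hlt
  · rw [heq]
  · exfalso
    have hmprime := G.irrel_isPrime h1
    set f := Ideal.Quotient.mk (Ideal.span T) with hf
    have hker : RingHom.ker f = Ideal.span T := Ideal.mk_ker
    haveI : J.IsPrime := hJprime
    haveI : (irrel G).IsPrime := hmprime
    have hJmap : (J.map f).IsPrime :=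
      Ideal.map_isPrime_of_surjective Ideal.Quotient.mk_surjective (by rw [hker]; exact hIJ)
    have hmmap : ((irrel G).map f).IsPrime :=
      Ideal.map_isPrime_of_surjective Ideal.Quotient.mk_surjective
        (by rw [hker]; exact le_trans hIJ hlt.le)
    have hcomapJ : Ideal.comap f (J.map f) = J := by
      rw [Ideal.comap_map_of_surjective f Ideal.Quotient.mk_surjective, ← RingHom.ker_eq_comap_bot,
        hker, sup_eq_left.mpr hIJ]
    have hlt2 : J.map f < (irrel G).map f := by
      refine lt_of_le_of_ne (Ideal.map_mono hlt.le) ?_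
      intro hEq
      have hcomapm : Ideal.comap f ((irrel G).map f) = irrel G := by
        rw [Ideal.comap_map_of_surjective f Ideal.Quotient.mk_surjective,
          ← RingHom.ker_eq_comap_bot, hker, sup_eq_left.mpr (le_trans hIJ hlt.le)]
      have : J = irrel G := by rw [← hcomapJ, hEq, hcomapm]
      exact hlt.ne this
    let p : PrimeSpectrum (R ⧸ Ideal.span T) := ⟨J.map f, hJmap⟩
    let q : PrimeSpectrum (R ⧸ Ideal.span T) := ⟨(irrel G).map f, hmmap⟩
    have hpq : p < q := hlt2
    let series : LTSeries (PrimeSpectrum (R ⧸ Ideal.span T)) :=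
      (RelSeries.singleton _ p).snoc q (by simpa using hpq)
    have hlen := Order.LTSeries.length_le_krullDim series
    rw [show ringKrullDim (R ⧸ Ideal.span T) = Order.krullDim (PrimeSpectrum (R ⧸ Ideal.span T))
      from rfl] at hdim
    rw [hdim] at hlen
    have hlength : series.length = 1 := rfl
    rw [hlength] at hlen
    norm_num at hlen

theorem deg_le_pow_irrel : ∀ (c : ℕ) {x : R}, x ∈ G.deg (c : ℤ) → x ∈ (irrel G) ^ c := by
  intro c
  induction c with
  | zero => intro x _; simp
  | succ n ih =>
    intro x hx
    rw [show ((n + 1 : ℕ) : ℤ) = (n : ℤ) + 1 from by push_cast; ring, G.standard n] at hx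
    have hle : G.deg 1 * G.deg (n : ℤ) ≤
        Submodule.restrictScalars k ((irrel G) ^ (n + 1)) := by
      rw [Submodule.mul_le]
      intro a ha b hb
      have : a * b ∈ irrel G * (irrel G) ^ n :=
        Ideal.mul_mem_mul (Ideal.subset_span ha) (ih hb)
      rwa [← pow_succ'] at this
    exact hle hx

theorem deg_le_of_pow_le {s : ℕ} {I' : Ideal R} (hs : (irrel G) ^ s ≤ I') {j : ℤ}
    (hj : (s : ℤ) ≤ j) {x : R} (hx : x ∈ G.deg j) : x ∈ I' := by
  obtain ⟨c, rfl⟩ := Int.eq_ofNat_of_zero_le (by omega : (0:ℤ) ≤ j)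
  have hcs : s ≤ c := by exact_mod_cast hj
  exact hs (Ideal.pow_le_pow_right hcs (G.deg_le_pow_irrel c hx))

end StdGraded

namespace StdGraded
open DirectSum Pointwise

variable (G : StdGraded k R)

/-- The set of degrees in which `A/B` is nonzero. -/
def Dset (A B : Ideal R) : Set ℤ := {j | ∃ y, y ∈ A ∧ y ∈ G.deg j ∧ y ∉ B}

theorem kosD_zero (t : Finset (Fin G.ngens)) : kosD G (fun _ => 0) t = 0 := by
  simp [kosD]

theorem tor_mem_Dset {A B : Ideal R} {i : ℕ} {j : ℤ} (h : TorNonzero G A B i j) :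
    (j - (i : ℤ)) ∈ G.Dset A B := by
  obtain ⟨f, hf, hcyc, hnb⟩ := h
  have hex : ∃ s, f s ∉ B := by
    by_contra hcon
    push_neg at hcon
    refine hnb ⟨fun _ => 0, ?_, ?_⟩
    · intro s
      split
      · exact ⟨zero_mem _, zero_mem _⟩
      · rfl
    · intro s
      rw [G.kosD_zero, sub_zero]
      exact hcon s
  obtain ⟨s, hs⟩ := hex
  have := hf s
  split at this
  · exact ⟨f s, this.1, this.2, hs⟩
  · exact absurd (this ▸ zero_mem B) hs

theorem socle_tor {A B : Ideal R} {t : ℤ}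
    (hAB : ∀ y, y ∈ A → y ∈ G.deg (t + 1) → y ∈ B)
    {x : R} (hx : x ∈ A) (hxd : x ∈ G.deg t) (hxB : x ∉ B) :
    TorNonzero G A B G.ngens (t + (G.ngens : ℤ)) := by
  classical
  refine ⟨fun s => if s = Finset.univ then x else 0, ?_, ?_, ?_⟩
  · intro s
    split
    · rename_i hcard
      have hs : s = Finset.univ := (Finset.card_eq_iff_eq_univ s).mp (by simpa using hcard)
      simp only [if_pos hs]
      refine ⟨hx, ?_⟩
      rwa [show t + (G.ngens : ℤ) - (G.ngens : ℤ) = t by ring]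
    · rename_i hcard
      simp only [ite_eq_right_iff]
      intro hs
      exact absurd (by rw [hs, Finset.card_univ, Fintype.card_fin]) hcard
  · intro tt
    refine Submodule.sum_mem _ fun l _ => ?_
    by_cases h : insert l tt = Finset.univ
    · simp only [if_pos h, mul_assoc]
      refine Ideal.mul_mem_left _ _ (hAB _ (Ideal.mul_mem_left _ _ hx) ?_)
      have := G.mul_mem_deg (G.gen_mem l) hxd
      rwa [add_comm] at this
    · simp only [if_neg h, mul_zero]
      exact zero_mem _
  · rintro ⟨g, hg, hfg⟩
    have hg0 : ∀ s, g s = 0 := by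
      intro s
      have h1 := hg s
      rwa [if_neg (by
        intro hc
        have h2 : s.card ≤ G.ngens := by simpa using Finset.card_le_univ s
        omega)] at h1
    have h3 := hfg Finset.univ
    simp only [if_pos rfl, kosD, hg0, mul_zero, Finset.sum_const_zero, sub_zero] at h3
    exact hxB h3

end StdGraded


namespace StdGraded
open DirectSum Pointwise

variable (G : StdGraded k R)

theorem Dset_step {d : ℕ} {T : Set R} (hT : T ⊆ (G.deg (d : ℤ) : Set R)) (q : ℕ) {j : ℤ}
    (hj : j ∈ G.Dset (Ideal.span T ^ (q + 1)) (Ideal.span T ^ (q + 1 + 1))) :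
    (j - (d : ℤ)) ∈ G.Dset (Ideal.span T ^ q) (Ideal.span T ^ (q + 1)) := by
  obtain ⟨y, hy1, hyd, hy2⟩ := hj
  by_contra hcon
  apply hy2
  have hrep := G.pi_pow_rep hT q hy1 j
  rw [G.pi_of_mem_same hyd] at hrep
  refine Ideal.span_le.mpr ?_ hrep
  rintro z ⟨t, ht, w, hw1, hw2, rfl⟩
  have hwB : w ∈ Ideal.span T ^ (q + 1) := by
    by_contra hwn
    exact hcon ⟨w, hw1, hw2, hwn⟩
  have h2 : t * w ∈ Ideal.span T * Ideal.span T ^ (q + 1) :=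
    Ideal.mul_mem_mul (Ideal.subset_span ht) hwB
  rwa [← pow_succ'] at h2

theorem Dset_bdd {s : ℕ} {T : Set R} (hs : irrel G ^ s ≤ Ideal.span T) (q : ℕ) {j : ℤ}
    (hj : j ∈ G.Dset (Ideal.span T ^ q) (Ideal.span T ^ (q + 1))) :
    j ≤ (s : ℤ) * ((q : ℤ) + 1) := by
  obtain ⟨y, hy1, hyd, hy2⟩ := hj
  by_contra hcon
  push_neg at hcon
  apply hy2
  have hpow : irrel G ^ (s * (q + 1)) ≤ Ideal.span T ^ (q + 1) := by
    rw [pow_mul]; exact Ideal.pow_right_mono hs _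
  exact G.deg_le_of_pow_le hpow (by push_cast; linarith) hyd

theorem Dset_nonempty {d : ℕ} (hd : 1 ≤ d) {T : Set R} (hT : T ⊆ (G.deg (d : ℤ) : Set R))
    (hproper : Ideal.span T ≠ ⊤) (hpow : ∀ n : ℕ, 1 ≤ n → Ideal.span T ^ n ≠ ⊥) (q : ℕ) :
    ∃ j, j ∈ G.Dset (Ideal.span T ^ q) (Ideal.span T ^ (q + 1)) := by
  rcases Nat.eq_zero_or_pos q with rfl | hq
  · refine ⟨0, 1, ?_, ?_, ?_⟩
    · rw [pow_zero, Ideal.one_eq_top]; exact Submodule.mem_top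
    · rw [G.deg_zero, Submodule.one_eq_span]; exact Submodule.mem_span_singleton_self 1
    · rw [pow_one]; exact (Ideal.ne_top_iff_one _).mp hproper
  · by_contra hcon
    push_neg at hcon
    have hle : Ideal.span T ^ q ≤ Ideal.span T ^ (q + 1) := by
      intro x hx
      obtain ⟨s0, hs0, hsum⟩ := G.sum_support_pi x
      rw [← hsum]
      refine Submodule.sum_mem _ fun j _ => ?_
      by_contra hnot
      exact hcon j ⟨G.pi j x, G.pow_isHomogeneous hT q hx, G.pi_mem j x, hnot⟩
    have hchain : ∀ m : ℕ, Ideal.span T ^ q ≤ Ideal.span T ^ (q + m) := by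
      intro m
      induction m with
      | zero => simp
      | succ m ih =>
        refine le_trans ih ?_
        rw [pow_add, show q + (m + 1) = (q + 1) + m by omega, pow_add]
        exact Ideal.mul_mono_left hle
    obtain ⟨x, hxq, hx0⟩ := (Submodule.ne_bot_iff _).mp (hpow q hq)
    obtain ⟨s0, hs0, hsum⟩ := G.sum_support_pi x
    have hexj : ∃ j, G.pi j x ≠ 0 := by
      by_contra hall
      push_neg at hall
      exact hx0 (by rw [← hsum]; exact Finset.sum_eq_zero fun j _ => hall j)
    obtain ⟨j, hj⟩ := hexj
    have hjnn : 0 ≤ j := le_of_not_gt fun hneg => hj (G.pi_eq_zero_of_neg hneg x)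
    obtain ⟨jn, rfl⟩ := Int.eq_ofNat_of_zero_le hjnn
    have hmem : G.pi (jn : ℤ) x ∈ Ideal.span T ^ (q + (jn + 1)) :=
      hchain (jn + 1) (G.pow_isHomogeneous hT q hxq)
    refine hj (G.pow_deg_vanish hT (q + (jn + 1)) ?_ hmem (G.pi_mem _ x))
    have h1 : (1 : ℤ) ≤ (d : ℤ) := by exact_mod_cast hd
    have h2 : (0 : ℤ) ≤ (q : ℤ) := Int.ofNat_nonneg q
    have h3 : (0 : ℤ) ≤ (jn : ℤ) := Int.ofNat_nonneg jn
    push_cast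
    nlinarith

theorem reg_eq {d s : ℕ} (hd : 1 ≤ d) {T : Set R} (hT : T ⊆ (G.deg (d : ℤ) : Set R))
    (hproper : Ideal.span T ≠ ⊤) (hpow : ∀ n : ℕ, 1 ≤ n → Ideal.span T ^ n ≠ ⊥)
    (hs : irrel G ^ s ≤ Ideal.span T) (q : ℕ) :
    ∃ t0 : ℤ, t0 ∈ G.Dset (Ideal.span T ^ q) (Ideal.span T ^ (q + 1)) ∧
      (∀ j ∈ G.Dset (Ideal.span T ^ q) (Ideal.span T ^ (q + 1)), j ≤ t0) ∧
      reg G (Ideal.span T ^ q) (Ideal.span T ^ (q + 1)) = t0 := by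
  obtain ⟨t0, ht0, hmax⟩ := Int.exists_greatest_of_bdd
    ⟨(s : ℤ) * ((q : ℤ) + 1), fun z hz => G.Dset_bdd hs q hz⟩
    (G.Dset_nonempty hd hT hproper hpow q)
  refine ⟨t0, ht0, hmax, ?_⟩
  obtain ⟨x, hx1, hxd, hx2⟩ := ht0
  have hsoc : ∀ y, y ∈ Ideal.span T ^ q → y ∈ G.deg (t0 + 1) → y ∈ Ideal.span T ^ (q + 1) := by
    intro y hy hyd
    by_contra hyn
    have := hmax (t0 + 1) ⟨y, hy, hyd, hyn⟩
    omega
  have htor := G.socle_tor hsoc hx1 hxd hx2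
  unfold reg
  have hub : ∀ e ∈ {e : ℤ | ∃ (i : ℕ) (j : ℤ), e = j - (i : ℤ) ∧
      TorNonzero G (Ideal.span T ^ q) (Ideal.span T ^ (q + 1)) i j}, e ≤ t0 := by
    rintro e ⟨i, j, rfl, ht⟩
    exact hmax _ (G.tor_mem_Dset ht)
  have hmem : t0 ∈ {e : ℤ | ∃ (i : ℕ) (j : ℤ), e = j - (i : ℤ) ∧
      TorNonzero G (Ideal.span T ^ q) (Ideal.span T ^ (q + 1)) i j} :=
    ⟨G.ngens, t0 + (G.ngens : ℤ), by ring, htor⟩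
  exact le_antisymm (csSup_le ⟨t0, hmem⟩ hub) (le_csSup ⟨t0, hub⟩ hmem)

end StdGraded

/-- If `I` is generated by forms of a single degree `d` and `dim R/I = 0`, then the
defect sequence `cₙ = reg Iⁿ⁻¹/Iⁿ - d·n + 1` is weakly decreasing. -/
theorem stmt2 (G : StdGraded k R) (I : Ideal R) (d : ℕ) (hd : 1 ≤ d)
    (hgen : GeneratedInDegree G d I) (hproper : I ≠ ⊤)
    (hpow : ∀ n : ℕ, 1 ≤ n → I ^ n ≠ ⊥)
    (hdim : ringKrullDim (R ⧸ I) = 0) :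
    ∀ n : ℕ, 1 ≤ n →
      reg G (I ^ n) (I ^ (n + 1)) - (d : ℤ) * (n + 1) + 1 ≤
        reg G (I ^ (n - 1)) (I ^ n) - (d : ℤ) * n + 1 := by
  obtain ⟨T, hT, rfl⟩ := hgen
  intro n hn
  obtain ⟨p, rfl⟩ : ∃ p, n = p + 1 := ⟨n - 1, by omega⟩
  have hrad := G.irrel_le_radical hd hT hproper hdim
  haveI := StdGraded.noetherianR G
  have hFG : (irrel G).FG := IsNoetherian.noetherian _
  obtain ⟨s, hs⟩ := Ideal.exists_pow_le_of_le_radical_of_fg hrad hFG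
  obtain ⟨t1, ht1D, ht1max, ht1reg⟩ := G.reg_eq hd hT hproper hpow hs (p + 1)
  obtain ⟨t0, ht0D, ht0max, ht0reg⟩ := G.reg_eq hd hT hproper hpow hs p
  have hstep := G.Dset_step hT p ht1D
  have hle : t1 - (d : ℤ) ≤ t0 := ht0max _ hstep
  simp only [Nat.add_sub_cancel]
  rw [ht1reg, ht0reg]
  push_cast
  linarith
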